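/- Let ψ = e^{kx}(1 + Σ ξ_s(x) k^{−s}) be a wave solution of Lψ = kψ for L = ∂ + Σ v_s ∂^{−s}, and ψ⁺ = e^{−kx}(1 + Σ ξ⁺_s(x)k^{−s}) the dual wave function (ψ⁺ = e^{−kx}Φ^{−1}). Then res_k (ψ⁺ (∂_xⁿ ψ)) dk = 0 for all n ≥ 0. -/

import Mathlib

/-!
STATEMENT 10: Let ψ = e^{kx}(1 + Σ ξ_s k^{−s}) be a wave solution of Lψ = kψ for
L = ∂ + Σ_{s≥1} v_s ∂^{−s}, and ψ⁺ = e^{−kx}Φ^{−1} the dual wave function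
(ψ = Φe^{kx}).  Then res_k (ψ⁺ (∂ⁿψ)) dk = 0 for all n ≥ 0.

Pseudodifferential operators `(N, c)` represent `Σ c s ∂^{N-s}`; `∂ⁿψ = (∂ⁿ∘Φ)e^{kx}`,
`ψ⁺(∂ⁿψ)` is the product of the right-adjoint symbol of Φ^{−1} and the left symbol of
∂ⁿ∘Φ, and `res_k (·) dk` is its `k^{−1}` coefficient.
-/

noncomputable section

def PsDO : Type := ℤ × (ℕ → PowerSeries ℂ)

namespace PsDO

def gbin (n : ℤ) (j : ℕ) : ℂ :=
  (∏ i ∈ Finset.range j, ((n : ℂ) - (i : ℂ))) / (j.factorial : ℂ)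

def coeffAt (A : PsDO) (n : ℤ) : PowerSeries ℂ :=
  if n ≤ A.1 then A.2 (A.1 - n).toNat else 0

def mul (A B : PsDO) : PsDO :=
  (A.1 + B.1, fun t => ∑ s ∈ Finset.range (t + 1), ∑ j ∈ Finset.range (t + 1 - s),
    A.2 s * PowerSeries.C (gbin (A.1 - s) j) *
      (PowerSeries.derivativeFun)^[j] (B.2 (t - s - j)))

def one : PsDO := (0, fun s => if s = 0 then 1 else 0)

def Dx : PsDO := (1, fun s => if s = 0 then 1 else 0)

def pow (A : PsDO) (n : ℕ) : PsDO := (mul A)^[n] one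

def rightSym (A : PsDO) : PsDO :=
  (A.1, fun t => ∑ j ∈ Finset.range (t + 1),
    PowerSeries.C ((-1 : ℂ) ^ j * gbin (A.1 - (t - j)) j) *
      (PowerSeries.derivativeFun)^[j] (A.2 (t - j)))

def smul (A B : PsDO) : PsDO :=
  (A.1 + B.1, fun t => ∑ s ∈ Finset.range (t + 1), A.2 s * B.2 (t - s))

end PsDO

open PsDO

namespace PsDO

open Finset PowerSeries

/-! ### gbin lemmas -/

lemma gbin_zero (n : ℤ) : gbin n 0 = 1 := by simp [gbin]

lemma prod_shift (n : ℤ) (j : ℕ) :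
    (∏ i ∈ range (j+1), ((((n+1 : ℤ)) : ℂ) - (i:ℂ)))
      = ((n:ℂ)+1) * ∏ i ∈ range j, ((n:ℂ) - (i:ℂ)) := by
  rw [Finset.prod_range_succ']
  rw [mul_comm]
  congr 1
  · push_cast; ring
  · exact Finset.prod_congr rfl fun i _ => by push_cast; ring

lemma gbin_pascal (n : ℤ) (j : ℕ) :
    gbin (n + 1) (j + 1) = gbin n (j + 1) + gbin n j := by
  have hj : ((j:ℂ)+1) ≠ 0 := Nat.cast_add_one_ne_zero j
  have hf : ((j.factorial : ℂ)) ≠ 0 := Nat.cast_ne_zero.mpr j.factorial_ne_zero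
  have hfs : (((j+1).factorial : ℂ)) = ((j:ℂ)+1) * (j.factorial : ℂ) := by
    rw [Nat.factorial_succ]; push_cast; ring
  unfold gbin
  rw [prod_shift, Finset.prod_range_succ, hfs]
  field_simp
  ring

lemma gbin_one_arg (j : ℕ) : gbin 1 j = if j ≤ 1 then 1 else 0 := by
  match j with
  | 0 => simp [gbin]
  | 1 => norm_num [gbin]
  | (k+2) =>
    rw [gbin, Finset.prod_eq_zero (i := 1) (by simp) (by norm_num)]
    simp

lemma gbin_zero_left (j : ℕ) : gbin 0 j = if j = 0 then 1 else 0 := by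
  match j with
  | 0 => simp [gbin]
  | (k+1) =>
    rw [gbin, Finset.prod_eq_zero (i := 0) (by simp) (by norm_num)]
    simp

lemma gbin_reflect (n : ℤ) (j : ℕ) :
    gbin ((j:ℤ) - 1 - n) j = (-1)^j * gbin n j := by
  unfold gbin
  have key : (∏ i ∈ range j, ((((j:ℤ) - 1 - n : ℤ) : ℂ) - (i:ℂ)))
      = (-1:ℂ)^j * ∏ i ∈ range j, ((n:ℂ) - (i:ℂ)) := by
    have h1 : (∏ i ∈ range j, ((((j:ℤ) - 1 - n : ℤ) : ℂ) - (i:ℂ)))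
        = ∏ i ∈ range j, (((i:ℂ)) - (n:ℂ)) := by
      rw [← Finset.prod_range_reflect (fun i => (((i:ℕ):ℂ) - (n:ℂ))) j]
      refine Finset.prod_congr rfl fun i hi => ?_
      have hij : i < j := Finset.mem_range.mp hi
      have h2 : ((j - 1 - i : ℕ) : ℂ) = (j:ℂ) - 1 - (i:ℂ) := by
        push_cast [Nat.cast_sub (by omega : i ≤ j - 1), Nat.cast_sub (by omega : 1 ≤ j)]
        ring
      simp only [h2]; push_cast; ring
    rw [h1, show ((-1:ℂ)^j) = ∏ _i ∈ range j, (-1:ℂ) from by simp, ← Finset.prod_mul_distrib]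
    exact Finset.prod_congr rfl fun i _ => by ring
  rw [key, mul_div_assoc]

/-! ### triangle sum lemmas -/

section Tri
variable {M : Type*} [AddCommMonoid M]

lemma tri_swap (T : ℕ) (F : ℕ → ℕ → M) :
    ∑ s ∈ range (T+1), ∑ j ∈ range (T+1-s), F s j
      = ∑ j ∈ range (T+1), ∑ s ∈ range (T+1-j), F s j := by
  induction T with
  | zero => simp
  | succ T ih =>
    have split : ∀ (G : ℕ → ℕ → M),
        ∑ s ∈ range (T+2), ∑ j ∈ range (T+2-s), G s j
          = (∑ s ∈ range (T+1), ∑ j ∈ range (T+1-s), G s j)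
            + ∑ s ∈ range (T+2), G s (T+1-s) := by
      intro G
      rw [Finset.sum_range_succ (fun s => ∑ j ∈ range (T+2-s), G s j)]
      have h1 : ∀ s ∈ range (T+1), ∑ j ∈ range (T+2-s), G s j
          = (∑ j ∈ range (T+1-s), G s j) + G s (T+1-s) := by
        intro s hs
        have hs' : s ≤ T := by simpa using Nat.lt_succ_iff.mp (mem_range.mp hs)
        have : T + 2 - s = (T + 1 - s) + 1 := by omega
        rw [this, Finset.sum_range_succ]
      rw [Finset.sum_congr rfl h1, Finset.sum_add_distrib]
      have h2 : T + 2 - (T+1) = 1 := by omega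
      rw [h2]
      have h4 : ∑ u ∈ range (T+2), G u (T+1-u)
          = (∑ u ∈ range (T+1), G u (T+1-u)) + G (T+1) 0 := by
        rw [show T+2 = (T+1)+1 from rfl, Finset.sum_range_succ]
        simp
      rw [h4, Finset.sum_range_one, add_assoc]
    rw [split F, split (fun s j => F j s)]
    rw [ih]
    congr 1
    rw [← Finset.sum_range_reflect (fun s => F s (T+1-s)) (T+2)]
    refine Finset.sum_congr rfl fun j hj => ?_
    have hj' : j < T + 2 := mem_range.mp hj
    have e1 : T+2-1-j = T+1-j := by omega
    have e2 : T+1-(T+1-j) = j := by omega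
    rw [e1, e2]

lemma tri_reflect (T : ℕ) (F : ℕ → ℕ → M) :
    ∑ s ∈ range (T+1), ∑ j ∈ range (T+1-s), F s j
      = ∑ s ∈ range (T+1), ∑ j ∈ range (T+1-s), F (T-s-j) j := by
  rw [tri_swap T F, tri_swap T (fun s j => F (T-s-j) j)]
  refine Finset.sum_congr rfl fun j hj => ?_
  have hj' : j ≤ T := Nat.lt_succ_iff.mp (mem_range.mp hj)
  rw [← Finset.sum_range_reflect (fun s => F s j) (T+1-j)]
  refine Finset.sum_congr rfl fun s hs => ?_
  have hs' : s < T + 1 - j := mem_range.mp hs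
  congr 1
  omega

lemma tri_anti (T : ℕ) (F : ℕ → ℕ → M) :
    ∑ s ∈ range (T+1), ∑ j ∈ range (s+1), F (s-j) j
      = ∑ u ∈ range (T+1), ∑ j ∈ range (T+1-u), F u j := by
  induction T with
  | zero => simp
  | succ T ih =>
    rw [Finset.sum_range_succ (fun s => ∑ j ∈ range (s+1), F (s-j) j), ih]
    have split : ∑ u ∈ range (T+2), ∑ j ∈ range (T+2-u), F u j
          = (∑ u ∈ range (T+1), ∑ j ∈ range (T+1-u), F u j)
            + ∑ u ∈ range (T+2), F u (T+1-u) := by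
      rw [Finset.sum_range_succ (fun u => ∑ j ∈ range (T+2-u), F u j)]
      have h1 : ∀ u ∈ range (T+1), ∑ j ∈ range (T+2-u), F u j
          = (∑ j ∈ range (T+1-u), F u j) + F u (T+1-u) := by
        intro u hu
        have : T + 2 - u = (T + 1 - u) + 1 := by
          have := Nat.lt_succ_iff.mp (mem_range.mp hu); omega
        rw [this, Finset.sum_range_succ]
      rw [Finset.sum_congr rfl h1, Finset.sum_add_distrib]
      have h2 : T + 2 - (T+1) = 1 := by omega
      rw [h2]
      have h4 : ∑ u ∈ range (T+2), F u (T+1-u)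
          = (∑ u ∈ range (T+1), F u (T+1-u)) + F (T+1) 0 := by
        rw [show T+2 = (T+1)+1 from rfl, Finset.sum_range_succ]
        simp
      rw [h4, Finset.sum_range_one, add_assoc]
    rw [split]
    congr 1
    rw [← Finset.sum_range_reflect (fun u => F u (T+1-u)) (T+2)]
    refine Finset.sum_congr rfl fun j hj => ?_
    have hj' : j < T + 2 := mem_range.mp hj
    congr 1
    omega

end Tri

/-! ### derivative lemmas -/

local notation "D" => PowerSeries.derivativeFun (R := ℂ)

lemma D_zero : D (0 : ℂ⟦X⟧) = 0 := by
  have : D (PowerSeries.C (0:ℂ)) = 0 := PowerSeries.derivativeFun_C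
  simpa using this

lemma D_sum {ι : Type*} (s : Finset ι) (f : ι → ℂ⟦X⟧) :
    D (∑ x ∈ s, f x) = ∑ x ∈ s, D (f x) := by
  classical
  induction s using Finset.induction_on with
  | empty => simpa using D_zero
  | insert _ _ h ih =>
    rw [Finset.sum_insert h, Finset.sum_insert h, PowerSeries.derivativeFun_add, ih]

lemma D_mul (u v : ℂ⟦X⟧) : D (u * v) = u * D v + v * D u := by
  rw [PowerSeries.derivativeFun_mul]; simp [smul_eq_mul]

/-! ### coefficient of mul Dx -/

lemma mulDx_coeff (A : PsDO) (t : ℕ) :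
    (mul Dx A).2 t = A.2 t + (if t = 0 then 0 else D (A.2 (t-1))) := by
  show (∑ s ∈ range (t + 1), ∑ j ∈ range (t + 1 - s),
      Dx.2 s * PowerSeries.C (gbin (Dx.1 - s) j) * D^[j] (A.2 (t - s - j))) = _
  rw [Finset.sum_eq_single_of_mem 0 (by simp) (fun s _ hs => by
    simp [Dx, if_neg hs])]
  have h1 : ∀ j, Dx.2 0 * PowerSeries.C (gbin (Dx.1 - (0:ℕ)) j) * D^[j] (A.2 (t - 0 - j))
      = PowerSeries.C (if j ≤ 1 then 1 else 0) * D^[j] (A.2 (t - j)) := by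
    intro j
    have : (Dx.1 - ((0:ℕ):ℤ)) = 1 := by simp [Dx]
    rw [this, gbin_one_arg]
    simp [Dx]
  simp only [Nat.sub_zero, Nat.add_sub_cancel] at h1 ⊢
  rw [Finset.sum_congr rfl (fun j _ => h1 j)]
  match t with
  | 0 => simp
  | (k+1) =>
    rw [Finset.sum_range_succ', Finset.sum_range_succ']
    have hz : ∀ j ∈ range k,
        PowerSeries.C (if j + 1 + 1 ≤ 1 then 1 else 0) * D^[j+1+1] (A.2 (k+1 - (j+1+1)))
          = 0 := by
      intro j _
      rw [if_neg (by omega)]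
      simp
    rw [Finset.sum_congr rfl hz, Finset.sum_const_zero]
    norm_num
    ring

/-! ### Dx associativity -/

lemma mul_left_coeff (A B : PsDO) (u : ℕ) :
    (mul A B).2 u = ∑ s ∈ range (u+1), ∑ j ∈ range (u+1-s),
      A.2 s * PowerSeries.C (gbin (A.1 - ↑s) j) * D^[j] (B.2 (u-s-j)) := rfl

lemma hL_lemma (A B : PsDO) (t : ℕ) :
    (mul (mul Dx A) B).2 t
      = (∑ s ∈ range (t+1), ∑ j ∈ range (t+1-s),
          A.2 s * PowerSeries.C (gbin (1 + A.1 - ↑s) j) * D^[j] (B.2 (t-s-j)))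
        + ∑ s ∈ range t, ∑ j ∈ range (t-s),
            D (A.2 s) * PowerSeries.C (gbin (A.1 - ↑s) j) * D^[j] (B.2 (t-1-s-j)) := by
  have step1 : (mul (mul Dx A) B).2 t
      = ∑ s ∈ range (t+1), ∑ j ∈ range (t+1-s),
          (A.2 s + (if s = 0 then 0 else D (A.2 (s-1))))
            * PowerSeries.C (gbin (1 + A.1 - ↑s) j) * D^[j] (B.2 (t-s-j)) := by
    show (∑ s ∈ range (t+1), ∑ j ∈ range (t+1-s),
        (mul Dx A).2 s * PowerSeries.C (gbin ((mul Dx A).1 - ↑s) j)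
          * D^[j] (B.2 (t-s-j))) = _
    refine Finset.sum_congr rfl fun s _ => Finset.sum_congr rfl fun j _ => ?_
    rw [mulDx_coeff]
    rfl
  rw [step1]
  have step2 : ∀ s ∈ range (t+1), ∑ j ∈ range (t+1-s),
      (A.2 s + (if s = 0 then 0 else D (A.2 (s-1))))
        * PowerSeries.C (gbin (1 + A.1 - ↑s) j) * D^[j] (B.2 (t-s-j))
      = (∑ j ∈ range (t+1-s),
          A.2 s * PowerSeries.C (gbin (1 + A.1 - ↑s) j) * D^[j] (B.2 (t-s-j)))
        + ∑ j ∈ range (t+1-s),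
          (if s = 0 then 0 else D (A.2 (s-1)))
            * PowerSeries.C (gbin (1 + A.1 - ↑s) j) * D^[j] (B.2 (t-s-j)) := by
    intro s _
    rw [← Finset.sum_add_distrib]
    exact Finset.sum_congr rfl fun j _ => by ring
  rw [Finset.sum_congr rfl step2, Finset.sum_add_distrib]
  congr 1
  rw [Finset.sum_range_succ' (fun s => ∑ j ∈ range (t+1-s),
      (if s = 0 then 0 else D (A.2 (s-1)))
        * PowerSeries.C (gbin (1 + A.1 - ↑s) j) * D^[j] (B.2 (t-s-j))) t]
  simp only [Nat.succ_ne_zero, if_false, if_true, reduceIte, zero_mul,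
    Finset.sum_const_zero, add_zero, Nat.add_sub_cancel]
  refine Finset.sum_congr rfl fun s _ => ?_
  have e1 : t + 1 - (s+1) = t - s := by omega
  rw [e1]
  refine Finset.sum_congr rfl fun j _ => ?_
  have e2 : (1 : ℤ) + A.1 - ↑(s+1) = A.1 - ↑s := by push_cast; ring
  have e3 : t - (s+1) - j = t - 1 - s - j := by omega
  rw [e2, e3]

lemma hRHS_lemma (A B : PsDO) (t : ℕ) :
    (mul Dx (mul A B)).2 t
      = (mul A B).2 t
        + ((∑ s ∈ range t, ∑ j ∈ range (t-s),
            D (A.2 s) * PowerSeries.C (gbin (A.1 - ↑s) j) * D^[j] (B.2 (t-1-s-j)))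
          + ∑ s ∈ range t, ∑ j ∈ range (t-s),
            A.2 s * PowerSeries.C (gbin (A.1 - ↑s) j) * D^[j+1] (B.2 (t-1-s-j))) := by
  rw [mulDx_coeff]
  match t with
  | 0 => simp
  | (k+1) =>
    congr 1
    rw [if_neg (Nat.succ_ne_zero k), Nat.add_sub_cancel, mul_left_coeff A B k, D_sum]
    have e4 : ∀ s ∈ range (k+1), D (∑ j ∈ range (k+1-s),
        A.2 s * PowerSeries.C (gbin (A.1 - ↑s) j) * D^[j] (B.2 (k-s-j)))
        = ∑ j ∈ range (k+1-s),
            (D (A.2 s) * PowerSeries.C (gbin (A.1 - ↑s) j) * D^[j] (B.2 (k-s-j))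
             + A.2 s * PowerSeries.C (gbin (A.1 - ↑s) j) * D^[j+1] (B.2 (k-s-j))) := by
      intro s _
      rw [D_sum]
      refine Finset.sum_congr rfl fun j _ => ?_
      rw [D_mul]
      have e5 : D (D^[j] (B.2 (k-s-j))) = D^[j+1] (B.2 (k-s-j)) :=
        (Function.iterate_succ_apply' _ j _).symm
      have hC : D (PowerSeries.C (gbin (A.1 - ↑s) j)) = 0 := PowerSeries.derivativeFun_C
      rw [e5, D_mul, hC]
      ring
    rw [Finset.sum_congr rfl e4]
    have e6 : ∀ s ∈ range (k+1), ∑ j ∈ range (k+1-s),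
        (D (A.2 s) * PowerSeries.C (gbin (A.1 - ↑s) j) * D^[j] (B.2 (k-s-j))
         + A.2 s * PowerSeries.C (gbin (A.1 - ↑s) j) * D^[j+1] (B.2 (k-s-j)))
        = (∑ j ∈ range (k+1-s),
            D (A.2 s) * PowerSeries.C (gbin (A.1 - ↑s) j) * D^[j] (B.2 (k-s-j)))
          + ∑ j ∈ range (k+1-s),
            A.2 s * PowerSeries.C (gbin (A.1 - ↑s) j) * D^[j+1] (B.2 (k-s-j)) :=
      fun s _ => Finset.sum_add_distrib
    rw [Finset.sum_congr rfl e6, Finset.sum_add_distrib]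

lemma hPMR_lemma (A B : PsDO) (t : ℕ) :
    (∑ s ∈ range (t+1), ∑ j ∈ range (t+1-s),
        A.2 s * PowerSeries.C (gbin (1 + A.1 - ↑s) j) * D^[j] (B.2 (t-s-j)))
      = (mul A B).2 t
        + ∑ s ∈ range t, ∑ j ∈ range (t-s),
            A.2 s * PowerSeries.C (gbin (A.1 - ↑s) j) * D^[j+1] (B.2 (t-1-s-j)) := by
  rw [mul_left_coeff A B t]
  have extR : ∑ s ∈ range t, ∑ j ∈ range (t-s),
      A.2 s * PowerSeries.C (gbin (A.1 - ↑s) j) * D^[j+1] (B.2 (t-1-s-j))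
      = ∑ s ∈ range (t+1), ∑ j ∈ range (t-s),
          A.2 s * PowerSeries.C (gbin (A.1 - ↑s) j) * D^[j+1] (B.2 (t-1-s-j)) := by
    rw [Finset.sum_range_succ]
    simp
  rw [extR, ← Finset.sum_add_distrib]
  refine Finset.sum_congr rfl fun s hs => ?_
  have hst : s ≤ t := Nat.lt_succ_iff.mp (Finset.mem_range.mp hs)
  have em : t + 1 - s = (t - s) + 1 := by omega
  rw [em]
  rw [Finset.sum_range_succ' (fun j => A.2 s * PowerSeries.C (gbin (1 + A.1 - ↑s) j)
        * D^[j] (B.2 (t-s-j))) (t-s),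
      Finset.sum_range_succ' (fun j => A.2 s * PowerSeries.C (gbin (A.1 - ↑s) j)
        * D^[j] (B.2 (t-s-j))) (t-s)]
  have epas : ∀ j ∈ range (t-s),
      A.2 s * PowerSeries.C (gbin (1 + A.1 - ↑s) (j+1)) * D^[j+1] (B.2 (t-s-(j+1)))
      = A.2 s * PowerSeries.C (gbin (A.1 - ↑s) (j+1)) * D^[j+1] (B.2 (t-s-(j+1)))
        + A.2 s * PowerSeries.C (gbin (A.1 - ↑s) j) * D^[j+1] (B.2 (t-1-s-j)) := by
    intro j _
    have e7 : (1 : ℤ) + A.1 - ↑s = (A.1 - ↑s) + 1 := by ring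
    have e8 : t - s - (j+1) = t - 1 - s - j := by omega
    rw [e7, gbin_pascal, map_add, e8]
    ring
  rw [Finset.sum_congr rfl epas, Finset.sum_add_distrib]
  have e9 : gbin (1 + A.1 - ↑s) 0 = gbin (A.1 - ↑s) 0 := by
    rw [gbin_zero, gbin_zero]
  rw [e9]
  abel

lemma Dx_assoc (A B : PsDO) : mul (mul Dx A) B = mul Dx (mul A B) := by
  have h1 : (mul (mul Dx A) B).1 = (mul Dx (mul A B)).1 := by
    show (1 + A.1) + B.1 = 1 + (A.1 + B.1)
    ring
  refine Prod.ext h1 ?_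
  funext t
  rw [hL_lemma A B t, hRHS_lemma A B t, hPMR_lemma A B t]
  abel

/-! ### residue duality -/

lemma smul_coeff (X A : PsDO) (T : ℕ) :
    (smul X A).2 T = ∑ s ∈ range (T+1), X.2 s * A.2 (T-s) := rfl

lemma rightSym_coeff (B : PsDO) (s : ℕ) :
    (rightSym B).2 s = ∑ j ∈ range (s+1),
      PowerSeries.C ((-1:ℂ)^j * gbin (B.1 - ((s:ℤ) - (j:ℤ))) j) * D^[j] (B.2 (s-j)) := rfl

lemma res_dual (A B : PsDO) (T : ℕ) (hT : (T:ℤ) = A.1 + B.1 + 1) :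
    (smul (rightSym B) A).2 T = (mul A B).2 T := by
  rw [smul_coeff]
  have h1 : ∀ s ∈ range (T+1), (rightSym B).2 s * A.2 (T-s)
      = ∑ j ∈ range (s+1),
          (fun (u j : ℕ) => PowerSeries.C ((-1:ℂ)^j * gbin (B.1 - ↑u) j)
            * D^[j] (B.2 u) * A.2 (T - (u+j))) (s-j) j := by
    intro s _
    rw [rightSym_coeff, Finset.sum_mul]
    refine Finset.sum_congr rfl fun j hj => ?_
    have hjs : j ≤ s := Nat.lt_succ_iff.mp (Finset.mem_range.mp hj)
    simp only
    rw [show ((s - j : ℕ) : ℤ) = (s:ℤ) - (j:ℤ) from by omega,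
      show s - j + j = s from by omega]
  rw [Finset.sum_congr rfl h1,
    tri_anti T (fun (u j : ℕ) => PowerSeries.C ((-1:ℂ)^j * gbin (B.1 - ↑u) j)
            * D^[j] (B.2 u) * A.2 (T - (u+j)))]
  rw [mul_left_coeff A B T,
    tri_reflect T (fun (s j : ℕ) => A.2 s * PowerSeries.C (gbin (A.1 - ↑s) j)
      * D^[j] (B.2 (T-s-j)))]
  refine Finset.sum_congr rfl fun u hu => Finset.sum_congr rfl fun j hj => ?_
  have hu' : u ≤ T := Nat.lt_succ_iff.mp (Finset.mem_range.mp hu)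
  have hj' : j < T + 1 - u := Finset.mem_range.mp hj
  have huj : u + j ≤ T := by omega
  have e2 : T - (u+j) = T - u - j := by omega
  have e3 : T - (T-u-j) - j = u := by omega
  have ecast : ((T - u - j : ℕ) : ℤ) = (T:ℤ) - ↑u - ↑j := by omega
  have earg : A.1 - ((T - u - j : ℕ) : ℤ) = (↑j : ℤ) - 1 - (B.1 - ↑u) := by
    rw [ecast]; omega
  simp only [e2, e3, earg, gbin_reflect]
  ring

/-! ### assembly -/

lemma one_mul_ps (A : PsDO) : mul one A = A := by
  refine Prod.ext (by show (0:ℤ) + A.1 = A.1; ring) ?_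
  funext t
  show (∑ s ∈ range (t+1), ∑ j ∈ range (t+1-s),
      one.2 s * PowerSeries.C (gbin (one.1 - ↑s) j) * D^[j] (A.2 (t-s-j))) = A.2 t
  rw [Finset.sum_eq_single_of_mem 0 (by simp) (fun s _ hs => by simp [one, if_neg hs])]
  rw [Finset.sum_eq_single_of_mem 0 (by simp) (fun j _ hj => by
    simp [one, gbin_zero_left, if_neg hj])]
  simp [one, gbin_zero_left]

lemma powDx_succ (n : ℕ) : pow Dx (n+1) = mul Dx (pow Dx n) :=
  Function.iterate_succ_apply' (mul Dx) n one

lemma powDx_eq (n : ℕ) : pow Dx n = (((n:ℕ):ℤ), fun s => if s = 0 then 1 else 0) := by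
  induction n with
  | zero =>
    show one = _
    refine Prod.ext (by simp [one]) rfl
  | succ n ih =>
    rw [powDx_succ, ih]
    refine Prod.ext ?_ ?_
    · show (1 : ℤ) + ↑n = ↑(n+1)
      push_cast; ring
    · funext t
      refine (mulDx_coeff _ t).trans ?_
      match t with
      | 0 => simp
      | 1 => simp [PowerSeries.derivativeFun_one]
      | (k+2) => simp [D_zero]

lemma mul_powDx (n : ℕ) (A : PsDO) : mul (pow Dx n) A = (mul Dx)^[n] A := by
  induction n with
  | zero => exact one_mul_ps A
  | succ n ih =>
    rw [powDx_succ, Dx_assoc, ih, ← Function.iterate_succ_apply' (mul Dx) n A]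

lemma iter_mul (n : ℕ) (A B : PsDO) :
    mul ((mul Dx)^[n] A) B = (mul Dx)^[n] (mul A B) := by
  induction n with
  | zero => rfl
  | succ n ih =>
    rw [Function.iterate_succ_apply' (mul Dx) n A, Dx_assoc, ih,
      ← Function.iterate_succ_apply' (mul Dx) n (mul A B)]

end PsDO

theorem stmt10 (L Φ Ψ : PsDO)
    (hLord : L.1 = 1) (hL0 : L.2 0 = 1) (hL1 : L.2 1 = 0)
    (hΦord : Φ.1 = 0) (hΦ0 : Φ.2 0 = 1)
    (hΨord : Ψ.1 = 0) (hΨ0 : Ψ.2 0 = 1)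
    (hinv₁ : ∀ n : ℤ, coeffAt (mul Φ Ψ) n = coeffAt one n)
    (hinv₂ : ∀ n : ℤ, coeffAt (mul Ψ Φ) n = coeffAt one n)
    (hwave : ∀ n : ℤ, coeffAt (mul L Φ) n = coeffAt (mul Φ Dx) n) :
    ∀ n : ℕ, coeffAt (smul (rightSym Ψ) (mul (pow Dx n) Φ)) (-1) = 0 := by
  intro n
  have horderM : (mul (pow Dx n) Φ).1 = ((n:ℕ):ℤ) := by
    show (pow Dx n).1 + Φ.1 = _
    rw [powDx_eq, hΦord]
    simp
  have hΦΨ : mul Φ Ψ = one := by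
    refine Prod.ext ?_ ?_
    · show Φ.1 + Ψ.1 = (0:ℤ)
      rw [hΦord, hΨord]; ring
    · funext t
      have h := hinv₁ (-(t:ℤ))
      unfold coeffAt at h
      have ho : (mul Φ Ψ).1 = 0 := by show Φ.1 + Ψ.1 = 0; rw [hΦord, hΨord]; ring
      rw [ho] at h
      simp only [one] at h
      norm_num at h
      simpa [one] using h
  have key : mul (mul (pow Dx n) Φ) Ψ = pow Dx n := by
    rw [mul_powDx, iter_mul, hΦΨ]
    rfl
  have hres := res_dual (mul (pow Dx n) Φ) Ψ (n+1)
    (by rw [horderM, hΨord]; push_cast; ring)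
  unfold coeffAt
  have hso : (smul (rightSym Ψ) (mul (pow Dx n) Φ)).1 = ((n:ℕ):ℤ) := by
    show (rightSym Ψ).1 + (mul (pow Dx n) Φ).1 = _
    rw [horderM]
    show Ψ.1 + _ = _
    rw [hΨord]; ring
  rw [hso]
  rw [if_pos (by omega : (-1:ℤ) ≤ ((n:ℕ):ℤ))]
  have hidx : (((n:ℕ):ℤ) - (-1)).toNat = n + 1 := by omega
  rw [hidx, hres, key, powDx_eq]
  simp
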